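/- Let K = (G, M, I) be a formal context and S, T ⊆ M. If S ⊆ T then r(S) ≤ r(T), where r(N) = 1 − (Σ_{c ∈ B(K)_N} |ext(c)|) / (Σ_{c ∈ B(K)} |ext(c)|) is the relative relevance of the attribute set N. -/
import Mathlib


open Finset

/-- A formal context `(G, M, I)` with finite object set `G`, finite attribute
set `M`, and incidence relation `I ⊆ G × M`. -/
structure FormalContext (α β : Type*) [DecidableEq α] [DecidableEq β] where
  G : Finset α
  M : Finset β
  I : Finset (α × β)
  inc : I ⊆ G ×ˢ M

namespace FormalContext

variable {α β : Type*} [DecidableEq α] [DecidableEq β]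

/-- The derivation operator `A ↦ A' = {m ∈ M : ∀ g ∈ A, (g,m) ∈ I}`. -/
def up (K : FormalContext α β) (A : Finset α) : Finset β :=
  K.M.filter fun m => ∀ g ∈ A, (g, m) ∈ K.I

/-- The derivation operator `B ↦ B' = {g ∈ G : ∀ m ∈ B, (g,m) ∈ I}`. -/
def down (K : FormalContext α β) (B : Finset β) : Finset α :=
  K.G.filter fun g => ∀ m ∈ B, (g, m) ∈ K.I

/-- The set `B(K)` of formal concepts of `K`: pairs `(A, B)` with `A' = B` and `B' = A`. -/
def concepts (K : FormalContext α β) : Finset (Finset α × Finset β) :=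
  (K.G.powerset ×ˢ K.M.powerset).filter fun c => K.up c.1 = c.2 ∧ K.down c.2 = c.1

/-- The extent label function `ℓ_K(g) = |{c ∈ B(K) : g ∈ ext(c)}|`. -/
def label (K : FormalContext α β) (g : α) : ℕ :=
  (K.concepts.filter fun c => g ∈ c.1).card

/-- The subcontext `K_N = (G, M \ N, I ∩ (G × (M \ N)))`. -/
def removeAttrs (K : FormalContext α β) (N : Finset β) : FormalContext α β where
  G := K.G
  M := K.M \ N
  I := K.I.filter fun p => p.2 ∉ N
  inc := by
    intro p hp
    rw [Finset.mem_filter] at hp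
    have h := K.inc hp.1
    rw [Finset.mem_product] at h ⊢
    exact ⟨h.1, Finset.mem_sdiff.mpr ⟨h.2, hp.2⟩⟩

/-- `m` is relevant to the object `g` iff `ℓ_{K_{m}}(g) < ℓ_K(g)`. -/
def RelevantTo (K : FormalContext α β) (m : β) (g : α) : Prop :=
  (K.removeAttrs {m}).label g < K.label g

/-- `m` is relevant to the context `K` iff it is relevant to some object `g ∈ G`. -/
def Relevant (K : FormalContext α β) (m : β) : Prop :=
  ∃ g ∈ K.G, K.RelevantTo m g

/-- `m` is irreducible iff there is no `X ⊆ M \ {m}` with `X' = m'`. -/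
def Irreducible (K : FormalContext α β) (m : β) : Prop :=
  ¬ ∃ X ⊆ K.M \ {m}, K.down X = K.down {m}

/-- `B(K)_N = {c ∈ B(K) : (int(c) \ N)' = ext(c)}`. -/
def conceptsRes (K : FormalContext α β) (N : Finset β) : Finset (Finset α × Finset β) :=
  K.concepts.filter fun c => K.down (c.2 \ N) = c.1

/-- The relative relevance `r(m) = 1 - (Σ_{g∈G} ℓ_{K_{m}}(g)) / (Σ_{g∈G} ℓ_K(g))`
of a single attribute `m`. -/
noncomputable def relRel (K : FormalContext α β) (m : β) : ℝ :=
  1 - (∑ g ∈ K.G, ((K.removeAttrs {m}).label g : ℝ)) / (∑ g ∈ K.G, (K.label g : ℝ))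

/-- The relative relevance of an attribute set `N`,
`r(N) = 1 - (Σ_{c ∈ B(K)_N} |ext(c)|) / (Σ_{c ∈ B(K)} |ext(c)|)`. -/
noncomputable def relRelSet (K : FormalContext α β) (N : Finset β) : ℝ :=
  1 - (∑ c ∈ K.conceptsRes N, (c.1.card : ℝ)) / (∑ c ∈ K.concepts, (c.1.card : ℝ))

/-- The Shannon object information entropy
`E_SE(K) = Σ_{g∈G} -(|g''|/|G|) log₂ (|g''|/|G|)`. -/
noncomputable def ESE (K : FormalContext α β) : ℝ :=
  ∑ g ∈ K.G, (-(((K.down (K.up {g})).card : ℝ) / (K.G.card : ℝ)) *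
    Real.logb 2 (((K.down (K.up {g})).card : ℝ) / (K.G.card : ℝ)))

/-- The object information entropy `E_OE(K) = (1/|G|) Σ_{g∈G} (1 - |g''|/|G|)`. -/
noncomputable def EOE (K : FormalContext α β) : ℝ :=
  (1 / (K.G.card : ℝ)) * ∑ g ∈ K.G, (1 - ((K.down (K.up {g})).card : ℝ) / (K.G.card : ℝ))

end FormalContext

/-- The ordinal scale `O_n = ([n], [n], ≤)`. -/
def ordinalScale (n : ℕ) : FormalContext ℕ ℕ where
  G := Finset.Icc 1 n
  M := Finset.Icc 1 n
  I := (Finset.Icc 1 n ×ˢ Finset.Icc 1 n).filter fun p => p.1 ≤ p.2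
  inc := Finset.filter_subset _ _

/-- The nominal scale `N_n = ([n], [n], =)`. -/
def nominalScale (n : ℕ) : FormalContext ℕ ℕ where
  G := Finset.Icc 1 n
  M := Finset.Icc 1 n
  I := (Finset.Icc 1 n ×ˢ Finset.Icc 1 n).filter fun p => p.1 = p.2
  inc := Finset.filter_subset _ _

/-- The contranominal scale `C_n = ([n], [n], ≠)`. -/
def contranominalScale (n : ℕ) : FormalContext ℕ ℕ where
  G := Finset.Icc 1 n
  M := Finset.Icc 1 n
  I := (Finset.Icc 1 n ×ˢ Finset.Icc 1 n).filter fun p => p.1 ≠ p.2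
  inc := Finset.filter_subset _ _

lemma down_anti {α β : Type*} [DecidableEq α] [DecidableEq β]
    (K : FormalContext α β) {B B' : Finset β} (h : B ⊆ B') :
    K.down B' ⊆ K.down B := by
  intro g hg
  rw [FormalContext.down, Finset.mem_filter] at hg ⊢
  exact ⟨hg.1, fun m hm => hg.2 m (h hm)⟩

lemma conceptsRes_anti {α β : Type*} [DecidableEq α] [DecidableEq β]
    (K : FormalContext α β) {S T : Finset β} (hST : S ⊆ T) :
    K.conceptsRes T ⊆ K.conceptsRes S := by
  intro c hc
  rw [FormalContext.conceptsRes, Finset.mem_filter] at hc ⊢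
  obtain ⟨hcc, hT⟩ := hc
  refine ⟨hcc, ?_⟩
  have hdc : K.down c.2 = c.1 := by
    rw [FormalContext.concepts, Finset.mem_filter] at hcc
    exact hcc.2.2
  have h1 : K.down (c.2 \ S) ⊆ K.down (c.2 \ T) :=
    down_anti K (Finset.sdiff_subset_sdiff (le_refl _) hST)
  have h2 : K.down c.2 ⊆ K.down (c.2 \ S) := down_anti K Finset.sdiff_subset
  rw [hdc] at h2
  rw [hT] at h1
  exact Finset.Subset.antisymm h1 h2

/-- If `S ⊆ T ⊆ M` then `r(S) ≤ r(T)`. -/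
theorem relRelSet_mono {α β : Type*} [DecidableEq α] [DecidableEq β]
    (K : FormalContext α β) (S T : Finset β) (hS : S ⊆ K.M) (hT : T ⊆ K.M)
    (hST : S ⊆ T) :
    K.relRelSet S ≤ K.relRelSet T := by
  unfold FormalContext.relRelSet
  have hsum : (∑ c ∈ K.conceptsRes T, (c.1.card : ℝ)) ≤
      ∑ c ∈ K.conceptsRes S, (c.1.card : ℝ) :=
    Finset.sum_le_sum_of_subset_of_nonneg (conceptsRes_anti K hST)
      (fun c _ _ => by positivity)
  have hd : (0:ℝ) ≤ ∑ c ∈ K.concepts, (c.1.card : ℝ) :=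
    Finset.sum_nonneg fun c _ => by positivity
  rcases hd.eq_or_lt with h | h
  · rw [← h, div_zero, div_zero]
  · have h2 : (∑ c ∈ K.conceptsRes T, (c.1.card : ℝ)) / (∑ c ∈ K.concepts, (c.1.card : ℝ)) ≤
        (∑ c ∈ K.conceptsRes S, (c.1.card : ℝ)) / (∑ c ∈ K.concepts, (c.1.card : ℝ)) := by
      gcongr
    linarith
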